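/- Let p, q, r > 2 be pairwise coprime integers with p the smallest; let u = x_1, v = y_1, μ = min(x_q, x_r, p − x_q, p − x_r) and C = ⌊μ/u⌋, and assume u ≤ μ, q > p² and v > q − q/p². Put a = (C−1)·u and ℓ = a·q·r. Let r' be the element of {r, −r} with x_{r'} < x_{−r'} and let q' be the element of {q, −q} with x_{q'} < x_{−q'}. Then χ(ℓ − r' + i) = 0, χ(ℓ + r' + i) = 0 and χ(ℓ − q' + i) = 0 for all integers i with −C < i < p. -/
import Mathlib
set_option maxHeartbeats 1000000


theorem stmt_15 (p q r : ℕ) (hp : 2 < p) (hq : 2 < q) (hr : 2 < r)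
    (cpq : Nat.Coprime p q) (cpr : Nat.Coprime p r) (cqr : Nat.Coprime q r)
    (hpq : p < q) (hpr : p < r)
    (x y z δ : ℤ → ℤ)
    (hrep : ∀ n : ℤ,
      n = x n * ((q : ℤ) * r) + y n * ((p : ℤ) * r) + z n * ((p : ℤ) * q) +
        δ n * ((p : ℤ) * q * r) ∧
      0 ≤ x n ∧ x n < (p : ℤ) ∧ 0 ≤ y n ∧ y n < (q : ℤ) ∧ 0 ≤ z n ∧ z n < (r : ℤ))
    (χ : ℤ → ℤ) (hχ : ∀ n : ℤ, χ n = if δ n = 0 then 1 else 0)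
    (u v μ C : ℤ) (hu : u = x 1) (hv : v = y 1)
    (hμ : μ = min (min (x q) (x r)) (min ((p : ℤ) - x q) ((p : ℤ) - x r)))
    (hC : C = μ / u)
    (huμ : u ≤ μ) (hqp2 : (p : ℤ) ^ 2 < (q : ℤ))
    (hvbig : (q : ℝ) - (q : ℝ) / (p : ℝ) ^ 2 < (v : ℝ))
    (a ℓ : ℤ) (ha : a = (C - 1) * u) (hℓ : ℓ = a * q * r)
    (r' q' : ℤ) (hr' : r' = (r : ℤ) ∨ r' = -(r : ℤ)) (hxr' : x r' < x (-r'))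
    (hq' : q' = (q : ℤ) ∨ q' = -(q : ℤ)) (hxq' : x q' < x (-q')) :
    ∀ i : ℤ, -C < i → i < (p : ℤ) →
      χ (ℓ - r' + i) = 0 ∧ χ (ℓ + r' + i) = 0 ∧ χ (ℓ - q' + i) = 0 := by
  intro i hiC hip
  subst hℓ
  subst ha
  have hP : (2:ℤ) < (p:ℤ) := by exact_mod_cast hp
  have hQ : (2:ℤ) < (q:ℤ) := by exact_mod_cast hq
  have hR : (2:ℤ) < (r:ℤ) := by exact_mod_cast hr
  have hPQ : (p:ℤ) < (q:ℤ) := by exact_mod_cast hpq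
  have hPR : (p:ℤ) < (r:ℤ) := by exact_mod_cast hpr
  have hP0 : (0:ℤ) < (p:ℤ) := by linarith
  have hQ0 : (0:ℤ) < (q:ℤ) := by linarith
  have hR0 : (0:ℤ) < (r:ℤ) := by linarith
  have hQR0 : (0:ℤ) < (q:ℤ) * (r:ℤ) := by positivity
  have hPR0 : (0:ℤ) < (p:ℤ) * (r:ℤ) := by positivity
  have copQR : IsCoprime ((p:ℤ)) ((q:ℤ)*(r:ℤ)) := by
    rw [← Nat.cast_mul, Nat.isCoprime_iff_coprime]; exact Nat.Coprime.mul_right cpq cpr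
  have copPR : IsCoprime ((q:ℤ)) ((p:ℤ)*(r:ℤ)) := by
    rw [← Nat.cast_mul, Nat.isCoprime_iff_coprime]; exact Nat.Coprime.mul_right cpq.symm cqr
  have copPQ : IsCoprime ((r:ℤ)) ((p:ℤ)*(q:ℤ)) := by
    rw [← Nat.cast_mul, Nat.isCoprime_iff_coprime]; exact Nat.Coprime.mul_right cpr.symm cqr.symm
  have hxdvd : ∀ n : ℤ, (p:ℤ) ∣ n - x n * ((q:ℤ)*r) := fun n =>
    ⟨y n * r + z n * q + δ n * ((q:ℤ)*r), by linear_combination (hrep n).1⟩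
  have hydvd : ∀ n : ℤ, (q:ℤ) ∣ n - y n * ((p:ℤ)*r) := fun n =>
    ⟨x n * r + z n * p + δ n * ((p:ℤ)*r), by linear_combination (hrep n).1⟩
  have xval : ∀ n t : ℤ, 0 ≤ t → t < (p:ℤ) → (p:ℤ) ∣ n - t * ((q:ℤ)*r) → x n = t := by
    intro n t ht0 htp hdvd
    have h1 := hxdvd n
    have h2 : (p:ℤ) ∣ (x n - t) * ((q:ℤ)*r) := by
      have h3 := dvd_sub hdvd h1
      have e : (n - t*((q:ℤ)*r)) - (n - x n*((q:ℤ)*r)) = (x n - t)*((q:ℤ)*r) := by ring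
      rwa [e] at h3
    have h3 : (p:ℤ) ∣ (x n - t) := copQR.dvd_of_dvd_mul_right h2
    have hb := (hrep n).2.1
    have hb2 := (hrep n).2.2.1
    have h4 : x n - t = 0 := Int.eq_zero_of_abs_lt_dvd h3 (by rw [abs_lt]; constructor <;> linarith)
    linarith
  have yval : ∀ n t : ℤ, 0 ≤ t → t < (q:ℤ) → (q:ℤ) ∣ n - t * ((p:ℤ)*r) → y n = t := by
    intro n t ht0 htp hdvd
    have h1 := hydvd n
    have h2 : (q:ℤ) ∣ (y n - t) * ((p:ℤ)*r) := by
      have h3 := dvd_sub hdvd h1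
      have e : (n - t*((p:ℤ)*r)) - (n - y n*((p:ℤ)*r)) = (y n - t)*((p:ℤ)*r) := by ring
      rwa [e] at h3
    have h3 : (q:ℤ) ∣ (y n - t) := copPR.dvd_of_dvd_mul_right h2
    have hb := (hrep n).2.2.2.1
    have hb2 := (hrep n).2.2.2.2.1
    have h4 : y n - t = 0 := Int.eq_zero_of_abs_lt_dvd h3 (by rw [abs_lt]; constructor <;> linarith)
    linarith
  have chi0 : ∀ n : ℤ, n < x n * ((q:ℤ)*r) + y n * ((p:ℤ)*r) → χ n = 0 := by
    intro n hlt
    rw [hχ n, if_neg]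
    intro hδ
    obtain ⟨he, _, _, _, _, hz0, _⟩ := hrep n
    rw [hδ] at he
    linarith [he, mul_nonneg hz0 (le_of_lt (mul_pos hP0 hQ0))]
  -- basic facts about u, v, C, a
  have hu0 : 0 ≤ u := hu ▸ (hrep 1).2.1
  have hdvd1x : (p:ℤ) ∣ 1 - u * ((q:ℤ)*r) := by rw [hu]; exact hxdvd 1
  have hdvd1y : (q:ℤ) ∣ 1 - v * ((p:ℤ)*r) := by rw [hv]; exact hydvd 1
  have hu1 : 1 ≤ u := by
    rcases hu0.lt_or_eq with h | h
    · linarith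
    · exfalso
      rw [← h] at hdvd1x
      simp at hdvd1x
      have := Int.le_of_dvd one_pos hdvd1x
      linarith
  have hμ1 : 1 ≤ μ := le_trans hu1 huμ
  have hC1 : 1 ≤ C := by
    rw [hC]; exact (Int.le_ediv_iff_mul_le (by linarith : (0:ℤ) < u)).mpr (by linarith)
  have hCu : C * u ≤ μ := by rw [hC]; exact Int.ediv_mul_le μ (by linarith)
  have ha0 : 0 ≤ (C-1)*u := mul_nonneg (by linarith) hu0
  have hau : (C-1)*u + u ≤ μ := by
    have e : (C - 1) * u + u = C * u := by ring
    linarith [hCu]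
  -- negation sums
  have negsum : ∀ n : ℤ, x n < x (-n) → x n + x (-n) = (p:ℤ) := by
    intro n hlt
    have h1 := hxdvd n
    have h2 := hxdvd (-n)
    have h3 : (p:ℤ) ∣ (x n + x (-n)) * ((q:ℤ)*r) := by
      have h4 := dvd_add h1 h2
      have e : (n - x n*((q:ℤ)*r)) + (-n - x (-n)*((q:ℤ)*r)) = -((x n + x (-n))*((q:ℤ)*r)) := by
        ring
      rw [e] at h4
      exact (dvd_neg).mp h4
    have h4 : (p:ℤ) ∣ x n + x (-n) := copQR.dvd_of_dvd_mul_right h3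
    obtain ⟨k, hk⟩ := h4
    have hb1 := (hrep n).2.1
    have hb2 := (hrep n).2.2.1
    have hb3 := (hrep (-n)).2.1
    have hb4 := (hrep (-n)).2.2.1
    have hk0 : 0 ≤ k := by
      by_contra hneg
      push_neg at hneg
      have hk1 : k ≤ -1 := by omega
      have := mul_le_mul_of_nonneg_left hk1 hP0.le
      simp only [mul_neg, mul_one] at this
      linarith [hk, hb1, hb3]
    have hk2 : k < 2 := by
      by_contra hneg
      push_neg at hneg
      have := mul_le_mul_of_nonneg_left hneg hP0.le
      linarith [hk, hb2, hb4]
    have hk1 : k = 0 ∨ k = 1 := by omega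
    rcases hk1 with h | h
    · exfalso; rw [h] at hk; simp at hk; omega
    · rw [h] at hk; linarith [hk]
  have hq'sum : x q' + x (-q') = (p:ℤ) := negsum q' hxq'
  have hr'sum : x r' + x (-r') = (p:ℤ) := negsum r' hxr'
  -- μ bounds
  have hμxq : μ ≤ x q := by rw [hμ]; exact le_trans (min_le_left _ _) (min_le_left _ _)
  have hμxr : μ ≤ x r := by rw [hμ]; exact le_trans (min_le_left _ _) (min_le_right _ _)
  have hμpxq : μ ≤ (p:ℤ) - x q := by rw [hμ]; exact le_trans (min_le_right _ _) (min_le_left _ _)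
  have hμpxr : μ ≤ (p:ℤ) - x r := by rw [hμ]; exact le_trans (min_le_right _ _) (min_le_right _ _)
  have hμq' : μ ≤ x q' := by
    rcases hq' with h | h
    · rw [h]; exact hμxq
    · have e : -q' = ((q:ℕ):ℤ) := by rw [h]; ring
      have e2 : x (-q') = x q := by rw [e]
      linarith [hq'sum]
  have hμpq' : μ ≤ (p:ℤ) - x q' := by
    rcases hq' with h | h
    · rw [h]; exact hμpxq
    · have e : -q' = ((q:ℕ):ℤ) := by rw [h]; ring
      have e2 : x (-q') = x q := by rw [e]
      linarith [hq'sum, hμxq]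
  have hμr' : μ ≤ x r' := by
    rcases hr' with h | h
    · rw [h]; exact hμxr
    · have e : -r' = ((r:ℕ):ℤ) := by rw [h]; ring
      have e2 : x (-r') = x r := by rw [e]
      linarith [hr'sum]
  have hμpr' : μ ≤ (p:ℤ) - x r' := by
    rcases hr' with h | h
    · rw [h]; exact hμpxr
    · have e : -r' = ((r:ℕ):ℤ) := by rw [h]; ring
      have e2 : x (-r') = x r := by rw [e]
      linarith [hr'sum, hμxr]
  have hxq'ub : x q' ≤ (p:ℤ) - 2 := by
    have h1 := Int.add_one_le_iff.mpr hxq'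
    have h2 := Int.add_one_le_iff.mpr (hrep (-q')).2.2.1
    linarith
  have hxr'ub : x r' ≤ (p:ℤ) - 2 := by
    have h1 := Int.add_one_le_iff.mpr hxr'
    have h2 := Int.add_one_le_iff.mpr (hrep (-r')).2.2.1
    linarith
  have haP : (C-1)*u ≤ (p:ℤ) - 3 := by linarith [hμq', hau, hu1, hxq'ub]
  have hCP : C ≤ (p:ℤ) - 2 := by
    have h1 : C * 1 ≤ C * u := mul_le_mul_of_nonneg_left hu1 (by linarith)
    linarith [hμq', hCu, hxq'ub]
  -- v facts
  have hv0 : 0 ≤ v := hv ▸ (hrep 1).2.2.2.1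
  have hvq : v < (q:ℤ) := hv ▸ (hrep 1).2.2.2.2.1
  have hqv1 : 1 ≤ (q:ℤ) - v := by omega
  have hqvP2 : ((q:ℤ) - v) * (p:ℤ)^2 ≤ (q:ℤ) - 1 := by
    have hp0 : (0:ℝ) < (p:ℝ)^2 := by positivity
    have h2 : (q:ℝ) - (v:ℝ) < (q:ℝ) / (p:ℝ)^2 := by linarith
    have h3 : ((q:ℝ) - (v:ℝ)) * (p:ℝ)^2 < (q:ℝ) := (lt_div_iff₀ hp0).mp h2
    have h4 : ((q:ℤ) - v) * (p:ℤ)^2 < (q:ℤ) := by exact_mod_cast h3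
    omega
  -- further bounds
  have hiCle : 1 - C ≤ i := by linarith [Int.lt_iff_add_one_le.mp hiC]
  have hiple : i ≤ (p:ℤ) - 1 := by linarith [Int.lt_iff_add_one_le.mp hip]
  have hQRnn : (0:ℤ) ≤ (q:ℤ)*r := hQR0.le
  have hPRnn : (0:ℤ) ≤ (p:ℤ)*r := hPR0.le
  have hA7 : (q:ℤ) < (q:ℤ)*r := lt_mul_of_one_lt_right hQ0 (by linarith)
  have KB : 0 ≤ i → i*(((q:ℤ)-v)*((p:ℤ)*r)) + i < (q:ℤ)*r := by
    intro h0
    have k1' : i*(((q:ℤ)-v)*((p:ℤ)*r)) ≤ ((p:ℤ)-1)*(((q:ℤ)-v)*((p:ℤ)*r)) :=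
      mul_le_mul_of_nonneg_right hiple (mul_nonneg (by linarith) hPRnn)
    have k3' : (p:ℤ) ≤ ((q:ℤ)-v)*(p:ℤ) := by
      have := mul_le_mul_of_nonneg_right hqv1 hP0.le
      linarith
    have k2' : ((p:ℤ)-1)*(((q:ℤ)-v)*(p:ℤ)) ≤ ((q:ℤ)-1) - (p:ℤ) := by
      linarith [hqvP2]
    have k4' : (((p:ℤ)-1)*(((q:ℤ)-v)*(p:ℤ)))*(r:ℤ) ≤ (((q:ℤ)-1)-(p:ℤ))*(r:ℤ) :=
      mul_le_mul_of_nonneg_right k2' hR0.le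
    linarith [mul_pos hP0 hR0]
  -- the r' cases
  have wfacts : ∀ w : ℤ, (w = r' ∨ w = -r') →
      1 ≤ x w ∧ x w ≤ (p:ℤ) - x r' ∧ (-(r:ℤ) ≤ w ∧ w ≤ (r:ℤ)) ∧
        x w * ((q:ℤ)*r) + y w * ((p:ℤ)*r) = w + (p:ℤ)*q*r := by
    intro w hw
    have hwr : w = ((r:ℕ):ℤ) ∨ w = -((r:ℕ):ℤ) := by
      rcases hw with h | h <;> rcases hr' with h2 | h2
      · exact Or.inl (by rw [h, h2])
      · exact Or.inr (by rw [h, h2])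
      · exact Or.inr (by rw [h, h2])
      · exact Or.inl (by rw [h, h2]; ring)
    have hwb : -(r:ℤ) ≤ w ∧ w ≤ (r:ℤ) := by
      rcases hwr with h | h <;> rw [h] <;> constructor <;> linarith
    have hrdvdw : (r:ℤ) ∣ w := by
      rcases hwr with h | h
      · exact ⟨1, by rw [h]; ring⟩
      · exact ⟨-1, by rw [h]; ring⟩
    obtain ⟨he, hx0, hxp, hy0, hyq, hz0, hzr⟩ := hrep w
    have hzw : z w = 0 := by
      have hdv : (r:ℤ) ∣ z w * ((p:ℤ)*q) := by
        have e : z w * ((p:ℤ)*q) = w - x w*((q:ℤ)*r) - y w*((p:ℤ)*r) - δ w*((p:ℤ)*q*r) := by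
          linear_combination -he
        rw [e]
        exact dvd_sub (dvd_sub (dvd_sub hrdvdw ⟨x w * q, by ring⟩) ⟨y w * p, by ring⟩)
          ⟨δ w * ((p:ℤ)*q), by ring⟩
      have h5 : (r:ℤ) ∣ z w := copPQ.dvd_of_dvd_mul_right hdv
      exact Int.eq_zero_of_abs_lt_dvd h5 (by rw [abs_lt]; constructor <;> linarith)
    have hxw1 : 1 ≤ x w := by
      rcases hx0.lt_or_eq with h | h
      · linarith
      · exfalso
        have h6 := hxdvd w
        rw [← h] at h6
        simp only [zero_mul, sub_zero] at h6
        have h7 : (p:ℤ) ∣ ((r:ℕ):ℤ) := by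
          rcases hwr with hh | hh
          · rwa [hh] at h6
          · rw [hh] at h6; exact (dvd_neg).mp h6
        have h8 : p ∣ r := Int.ofNat_dvd.mp h7
        have h9 : p ∣ 1 := cpr ▸ Nat.dvd_gcd dvd_rfl h8
        have h10 := Nat.dvd_one.mp h9
        omega
    have hxwub : x w ≤ (p:ℤ) - x r' := by
      rcases hw with h | h
      · rw [h]; linarith [hr'sum, hxr']
      · rw [h]; linarith [hr'sum]
    have hxub1 : x w ≤ (p:ℤ) - 1 := by linarith [Int.lt_iff_add_one_le.mp hxp]
    have hyub1 : y w ≤ (q:ℤ) - 1 := by linarith [Int.lt_iff_add_one_le.mp hyq]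
    have hδw : δ w = -1 := by
      have h11 : (q:ℤ)*r ≤ x w * ((q:ℤ)*r) := le_mul_of_one_le_left hQRnn hxw1
      have h12 : 0 ≤ y w * ((p:ℤ)*r) := mul_nonneg hy0 hPRnn
      have h13 : (r:ℤ) < (q:ℤ)*r := lt_mul_of_one_lt_left hR0 (by linarith)
      have hd0 : δ w ≤ -1 := by
        by_contra hh
        push_neg at hh
        have hh2 : 0 ≤ δ w := by linarith
        have h10 : 0 ≤ δ w * ((p:ℤ)*q*r) := mul_nonneg hh2 (by positivity)
        rw [hzw] at he
        linarith [he, hwb.2]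
      have hd2 : -1 ≤ δ w := by
        by_contra hh
        push_neg at hh
        have hh2 : δ w ≤ -2 := by linarith
        have h10 : δ w * ((p:ℤ)*q*r) ≤ -2*((p:ℤ)*q*r) := by
          have := mul_le_mul_of_nonneg_right hh2 (show (0:ℤ) ≤ (p:ℤ)*q*r by positivity)
          linarith
        have h14 : x w * ((q:ℤ)*r) ≤ ((p:ℤ)-1)*((q:ℤ)*r) := mul_le_mul_of_nonneg_right hxub1 hQRnn
        have h15 : y w * ((p:ℤ)*r) ≤ ((q:ℤ)-1)*((p:ℤ)*r) := mul_le_mul_of_nonneg_right hyub1 hPRnn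
        rw [hzw] at he
        linarith [he, hwb.1, h10, h13, h14, h15, mul_pos hP0 hR0]
      have : δ w = -1 := le_antisymm hd0 hd2
      exact this
    refine ⟨hxw1, hxwub, hwb, ?_⟩
    rw [hzw, hδw] at he
    linear_combination -he
  have mainB : ∀ w : ℤ, (w = r' ∨ w = -r') → χ ((C-1)*u*(q:ℤ)*(r:ℤ) + w + i) = 0 := by
    intro w hw
    obtain ⟨hX1, hXub, ⟨hwlb, hwub⟩, hkey⟩ := wfacts w hw
    obtain ⟨hmrep, hxm0, hxmp, hym0, hymq, hzm0, hzmr⟩ := hrep ((C-1)*u*(q:ℤ)*(r:ℤ) + w + i)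
    obtain ⟨k1, hk1⟩ := hxdvd w
    obtain ⟨k2, hk2⟩ := hdvd1x
    obtain ⟨k3, hk3⟩ := hydvd w
    obtain ⟨k4, hk4⟩ := hdvd1y
    rcases le_or_gt i 0 with hi0 | hi1
    · -- i ≤ 0
      have hxm : x ((C-1)*u*(q:ℤ)*(r:ℤ) + w + i) = (C-1+i)*u + x w := by
        apply xval
        · have h1 : 0 ≤ (C-1+i)*u := mul_nonneg (by linarith) hu0
          linarith
        · have h1 : (C-1+i)*u ≤ (C-1)*u := mul_le_mul_of_nonneg_right (by linarith) hu0
          linarith [hμr', hau, hu1, hXub]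
        · exact ⟨k1 + i*k2, by linear_combination hk1 + i * hk2⟩
      have hym : y ((C-1)*u*(q:ℤ)*(r:ℤ) + w + i) = y w + (-i)*((q:ℤ)-v) := by
        apply yval
        · have h1 : 0 ≤ (-i)*((q:ℤ)-v) := mul_nonneg (by linarith) (by linarith)
          linarith [(hrep w).2.2.2.1]
        · have h1 : (-i)*((q:ℤ)-v) ≤ (C-1)*((q:ℤ)-v) :=
            mul_le_mul_of_nonneg_right (by linarith) (by linarith)
          have h2 : ((C-1)*((q:ℤ)-v))*((p:ℤ)*r) < ((q:ℤ) - y w)*((p:ℤ)*r) := by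
            have e : ((q:ℤ) - y w)*((p:ℤ)*r) = x w*((q:ℤ)*r) - w := by linear_combination -hkey
            have h3 : (q:ℤ)*r ≤ x w * ((q:ℤ)*r) := le_mul_of_one_le_left hQRnn hX1
            have h4 : ((C:ℤ)-1)*(((q:ℤ)-v)*(p:ℤ)) ≤ ((p:ℤ)-3)*(((q:ℤ)-v)*(p:ℤ)) :=
              mul_le_mul_of_nonneg_right (by linarith [hCP]) (mul_nonneg (by linarith) hP0.le)
            have h6 : (p:ℤ) ≤ ((q:ℤ)-v)*(p:ℤ) := by
              have := mul_le_mul_of_nonneg_right hqv1 hP0.le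
              linarith
            have h5 : (((p:ℤ)-3)*(((q:ℤ)-v)*(p:ℤ)))*(r:ℤ) ≤ (((q:ℤ)-1) - 3*(p:ℤ))*(r:ℤ) := by
              apply mul_le_mul_of_nonneg_right _ hR0.le
              linarith [hqvP2]
            have h7 : (((C:ℤ)-1)*(((q:ℤ)-v)*(p:ℤ)))*(r:ℤ) ≤ (((p:ℤ)-3)*(((q:ℤ)-v)*(p:ℤ)))*(r:ℤ) :=
              mul_le_mul_of_nonneg_right h4 hR0.le
            linarith [e, h3, h5, h7, hwub, mul_pos hP0 hR0]
          have h8 : (C-1)*((q:ℤ)-v) < (q:ℤ) - y w := lt_of_mul_lt_mul_right (by linarith [h2]) hPRnn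
          linarith
        · exact ⟨(C-1)*u*r + k3 + i*k4 + i*((p:ℤ)*r), by linear_combination hk3 + i * hk4⟩
      apply chi0
      rw [hxm, hym]
      have A1 : ((1:ℤ)-C)*u*((q:ℤ)*r) ≤ i*u*((q:ℤ)*r) :=
        mul_le_mul_of_nonneg_right (mul_le_mul_of_nonneg_right hiCle hu0) hQRnn
      have A2 : 0 ≤ (-i)*(((q:ℤ)-v)*((p:ℤ)*r)) :=
        mul_nonneg (by linarith) (mul_nonneg (by linarith) hPRnn)
      have A3 : ((C:ℤ)-1)*u*((q:ℤ)*r) ≤ ((p:ℤ)-3)*((q:ℤ)*r) :=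
        mul_le_mul_of_nonneg_right haP hQRnn
      linarith [A1, A2, A3, hkey, hQR0, hi0]
    · -- 1 ≤ i
      rcases le_or_gt (i*((q:ℤ)-v)) (y w) with hnw | hwrap
      · have hym : y ((C-1)*u*(q:ℤ)*(r:ℤ) + w + i) = y w - i*((q:ℤ)-v) := by
          apply yval
          · linarith
          · have h1 : 0 ≤ i*((q:ℤ)-v) := mul_nonneg (by linarith) (by linarith)
            linarith [(hrep w).2.2.2.2.1]
          · exact ⟨(C-1)*u*r + k3 + i*k4 + i*((p:ℤ)*r), by linear_combination hk3 + i * hk4⟩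
        apply chi0
        rw [hym]
        have B1 : (x w + (C-1)*u)*((q:ℤ)*r) ≤ ((p:ℤ)-1)*((q:ℤ)*r) := by
          apply mul_le_mul_of_nonneg_right _ hQRnn
          linarith [hXub, hμr', hau, hu1]
        have B3 : 0 ≤ x ((C-1)*u*(q:ℤ)*(r:ℤ) + w + i) * ((q:ℤ)*r) := mul_nonneg hxm0 hQRnn
        linarith [B1, B3, KB hi1.le, hkey]
      · have hym : y ((C-1)*u*(q:ℤ)*(r:ℤ) + w + i) = y w - i*((q:ℤ)-v) + q := by
          apply yval
          · have h1 : i*((q:ℤ)-v) ≤ ((p:ℤ)-1)*((q:ℤ)-v) :=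
              mul_le_mul_of_nonneg_right hiple (by linarith)
            have h2 : ((q:ℤ)-v)*((p:ℤ)-1) ≤ ((q:ℤ)-v)*(p:ℤ)^2 :=
              mul_le_mul_of_nonneg_left (by linarith [sq_nonneg ((p:ℤ)-1), hP0]) (by linarith)
            linarith [hqvP2, (hrep w).2.2.2.1]
          · linarith
          · exact ⟨(C-1)*u*r + k3 + i*k4 + i*((p:ℤ)*r) - (p:ℤ)*r,
              by linear_combination hk3 + i * hk4⟩
        apply chi0
        rw [hym]
        have C1 : ((C:ℤ)-1)*u*((q:ℤ)*r) ≤ ((p:ℤ)-3)*((q:ℤ)*r) :=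
          mul_le_mul_of_nonneg_right haP hQRnn
        have C2 : x w*((q:ℤ)*r) ≤ ((p:ℤ)-1)*((q:ℤ)*r) :=
          mul_le_mul_of_nonneg_right (by linarith [Int.lt_iff_add_one_le.mp (hrep w).2.2.1]) hQRnn
        have B3 : 0 ≤ x ((C-1)*u*(q:ℤ)*(r:ℤ) + w + i) * ((q:ℤ)*r) := mul_nonneg hxm0 hQRnn
        linarith [C1, C2, B3, KB hi1.le, hkey, hQR0]
  have mainA : χ ((C-1)*u*(q:ℤ)*(r:ℤ) - q' + i) = 0 := by
    obtain ⟨hmrep, hxm0, hxmp, hym0, hymq, hzm0, hzmr⟩ := hrep ((C-1)*u*(q:ℤ)*(r:ℤ) - q' + i)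
    obtain ⟨k5, hk5⟩ := hxdvd q'
    obtain ⟨k2, hk2⟩ := hdvd1x
    obtain ⟨k4, hk4⟩ := hdvd1y
    obtain ⟨kq, hkq⟩ : ∃ kq : ℤ, q' = (q:ℤ) * kq := by
      rcases hq' with h | h
      · exact ⟨1, by rw [h]; ring⟩
      · exact ⟨-1, by rw [h]; ring⟩
    have hq'b : -(q:ℤ) ≤ q' ∧ q' ≤ (q:ℤ) := by
      rcases hq' with h | h <;> rw [h] <;> constructor <;> linarith
    rcases le_or_gt i 0 with hi0 | hi1
    · have hxm : x ((C-1)*u*(q:ℤ)*(r:ℤ) - q' + i) = (C-1+i)*u + ((p:ℤ) - x q') := by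
        apply xval
        · have h1 : 0 ≤ (C-1+i)*u := mul_nonneg (by linarith) hu0
          linarith [hxq'ub]
        · have h1 : (C-1+i)*u ≤ (C-1)*u := mul_le_mul_of_nonneg_right (by linarith) hu0
          linarith [hμq', hau, hu1]
        · exact ⟨-k5 - (q:ℤ)*r + i*k2, by linear_combination -hk5 + i*hk2⟩
      apply chi0
      rw [hxm]
      have A1 : ((1:ℤ)-C)*u*((q:ℤ)*r) ≤ i*u*((q:ℤ)*r) :=
        mul_le_mul_of_nonneg_right (mul_le_mul_of_nonneg_right hiCle hu0) hQRnn
      have A2 : μ*((q:ℤ)*r) ≤ ((p:ℤ) - x q')*((q:ℤ)*r) := mul_le_mul_of_nonneg_right hμpq' hQRnn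
      have A5 : (u - μ)*((q:ℤ)*r) ≤ ((1:ℤ)-C)*u*((q:ℤ)*r) :=
        mul_le_mul_of_nonneg_right (by linarith [hCu]) hQRnn
      have A6 : (q:ℤ)*r ≤ u*((q:ℤ)*r) := le_mul_of_one_le_left hQRnn hu1
      have A8 : 0 ≤ y ((C-1)*u*(q:ℤ)*(r:ℤ) - q' + i) * ((p:ℤ)*r) := mul_nonneg hym0 hPRnn
      linarith [A1, A2, A5, A6, A8, hq'b.1, hA7, hi0]
    · have hym : y ((C-1)*u*(q:ℤ)*(r:ℤ) - q' + i) = (q:ℤ) - i*((q:ℤ)-v) := by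
        apply yval
        · have h1 : i*((q:ℤ)-v) ≤ ((p:ℤ)-1)*((q:ℤ)-v) :=
            mul_le_mul_of_nonneg_right hiple (by linarith)
          have h2 : ((q:ℤ)-v)*((p:ℤ)-1) ≤ ((q:ℤ)-v)*(p:ℤ)^2 :=
            mul_le_mul_of_nonneg_left (by linarith [sq_nonneg ((p:ℤ)-1), hP0]) (by linarith)
          linarith [hqvP2]
        · have h1 : 1*1 ≤ i*((q:ℤ)-v) := mul_le_mul (by linarith) hqv1 (by norm_num) (by linarith)
          linarith
        · exact ⟨(C-1)*u*r - kq - (p:ℤ)*r + i*k4 + i*((p:ℤ)*r),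
            by linear_combination -hkq + i*hk4⟩
      apply chi0
      rw [hym]
      have C1 : ((C:ℤ)-1)*u*((q:ℤ)*r) ≤ ((p:ℤ)-3)*((q:ℤ)*r) :=
        mul_le_mul_of_nonneg_right haP hQRnn
      have B3 : 0 ≤ x ((C-1)*u*(q:ℤ)*(r:ℤ) - q' + i) * ((q:ℤ)*r) := mul_nonneg hxm0 hQRnn
      linarith [C1, B3, KB hi1.le, hq'b.1, hQR0, hA7]
  refine ⟨?_, ?_, mainA⟩
  · have h := mainB (-r') (Or.inr rfl)
    rwa [show (C-1)*u*(q:ℤ)*(r:ℤ) + -r' + i = (C-1)*u*(q:ℤ)*(r:ℤ) - r' + i from by ring] at h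
  · exact mainB r' (Or.inl rfl)
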